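/- arXiv:2011.12038 — 4 statements merged into one kernel-verified Lean document; each statement's English description precedes it below -/
import Mathlib

section
/- Let Γ be a strongly connected digraph with dim(Γ) = k and diameter d. Then k + d ≤ |A(Γ)| ≤ ((d² + 3d − 2)/2)^(2k) + (2k − d)·d^(2k−1) + k² − k, where |A(Γ)| is the number of arcs of Γ. -/
/-!  Common definitions for weak metric dimension of digraphs.

A digraph is modelled by a vertex type `V` together with an arc relation
`A : V → V → Prop` (simplicity is expressed by `Irreflexive A`). -/

/-- There is a directed walk of length `n` from `x` to `y`. -/
def walkLen {V : Type*} (A : V → V → Prop) : ℕ → V → V → Prop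
  | 0 => fun x y => x = y
  | n + 1 => fun x y => ∃ z, A x z ∧ walkLen A n z y

/-- `∂(x,y)`: the length of a shortest directed path from `x` to `y`. -/
noncomputable def ddist {V : Type*} (A : V → V → Prop) (x y : V) : ℕ :=
  sInf {n | walkLen A n x y}

/-- The two way distance `∂̃(x,y) = (∂(x,y), ∂(y,x))`. -/
noncomputable def twoDist {V : Type*} (A : V → V → Prop) (x y : V) : ℕ × ℕ :=
  (ddist A x y, ddist A y x)

/-- Strong connectivity: any vertex can be reached from any vertex by a directed walk. -/
def IsStronglyConnected {V : Type*} (A : V → V → Prop) : Prop :=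
  ∀ x y : V, ∃ n, walkLen A n x y

/-- `S` is a weakly resolving set: distinct vertices have different tuples of
two way distances from the vertices of `S`. -/
def IsWeaklyResolving {V : Type*} (A : V → V → Prop) (S : Set V) : Prop :=
  ∀ u v : V, (∀ w ∈ S, twoDist A w u = twoDist A w v) → u = v

/-- The weak metric dimension: minimum cardinality of a weakly resolving set. -/
noncomputable def wdim {V : Type*} [Fintype V] (A : V → V → Prop) : ℕ :=
  sInf {k | ∃ S : Finset V, S.card = k ∧ IsWeaklyResolving A ↑S}

/-- The diameter: the maximum of `∂(x,y)` over all ordered pairs of vertices. -/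
noncomputable def diam {V : Type*} [Fintype V] (A : V → V → Prop) : ℕ :=
  sSup {m | ∃ x y : V, ddist A x y = m}

/-- `f(n,d)`: the least positive integer `k` with `k + d^(2k) ≥ n`. -/
noncomputable def fnd (n d : ℕ) : ℕ :=
  sInf {k | 0 < k ∧ n ≤ k + d ^ (2 * k)}

/-- An isomorphism from `(V, A)` onto `(W, B)` exists. -/
def IsIsoTo {V W : Type*} (A : V → V → Prop) (B : W → W → Prop) : Prop :=
  ∃ e : V ≃ W, ∀ x y, A x y ↔ B (e x) (e y)

/-- The digraph of Example 2.3: vertices `v_1, …, v_n` are the elements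
`0, …, n-1` of `Fin n` (so `v_i` is `i - 1`). -/
def egArc (n d : ℕ) : Fin n → Fin n → Prop := fun x y =>
  (x.val = n - 1 ∧ y.val ≤ n - d) ∨
  (x.val ≤ n - d ∧ y.val = n - d + 1) ∨
  (n - d + 1 ≤ x.val ∧ x.val ≤ n - 2 ∧ y.val = x.val + 1)

/-- The `r`-th (0-based) coordinate of the tuple `v_{j+1}` in Construction 2.4;
it lies in `{1, …, d}` and `j = Σ_r (coord r - 1) d^r`. -/
def gcoord (d j r : ℕ) : ℕ := j / d ^ r % d + 1

/-- The arc relation of Construction 2.4, with the `u`-vertices `Fin k` on the left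
and the `v`-vertices `Fin m` on the right of the sum. -/
def gammaArcKM (d k : ℕ) {m : ℕ} : Fin k ⊕ Fin m → Fin k ⊕ Fin m → Prop
  | .inl _, .inl _ => False
  | .inl i, .inr j => gcoord d j.val (2 * i.val) = 1
  | .inr j, .inl i => gcoord d j.val (2 * i.val + 1) = 1
  | .inr j, .inr l => j ≠ l ∧ ∀ r < k,
      gcoord d l.val (2 * r) ≤ gcoord d j.val (2 * r) + 1 ∧
      gcoord d j.val (2 * r + 1) ≤ gcoord d l.val (2 * r + 1) + 1

/-- The arc relation of `Γ̄`: `Γ` of Construction 2.4 together with symmetric arcs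
between any two distinct `u`-vertices. -/
def gammaBarArcKM (d k : ℕ) {m : ℕ} : Fin k ⊕ Fin m → Fin k ⊕ Fin m → Prop
  | .inl i, .inl i' => i ≠ i'
  | x, y => gammaArcKM d k x y

/-- The directed cycle of length `m` on `Fin m`. -/
def cycArc (m : ℕ) [NeZero m] : Fin m → Fin m → Prop := fun x y => y = x + 1

/-- `σ` is an automorphism of the digraph `(V, A)`. -/
def IsDigraphAuto {V : Type*} (A : V → V → Prop) (σ : V ≃ V) : Prop :=
  ∀ a b, A a b ↔ A (σ a) (σ b)

/-- Vertex-transitivity. -/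
def IsVertexTransitive {V : Type*} (A : V → V → Prop) : Prop :=
  ∀ x y : V, ∃ σ : V ≃ V, IsDigraphAuto A σ ∧ σ x = y

/-- Weak distance-transitivity. -/
def IsWeaklyDistanceTransitive {V : Type*} (A : V → V → Prop) : Prop :=
  ∀ x y x' y' : V, twoDist A x y = twoDist A x' y' →
    ∃ σ : V ≃ V, IsDigraphAuto A σ ∧ σ x = x' ∧ σ y = y'

/-- Weak distance-regularity. -/
noncomputable def IsWeaklyDistanceRegular {V : Type*} (A : V → V → Prop) : Prop :=
  ∀ i j : ℕ × ℕ, (∃ a b : V, twoDist A a b = i) → (∃ a b : V, twoDist A a b = j) →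
    ∀ x y x' y' : V, twoDist A x y = twoDist A x' y' →
      Set.ncard {z : V | twoDist A x z = i ∧ twoDist A z y = j} =
      Set.ncard {z : V | twoDist A x' z = i ∧ twoDist A z y' = j}

/-- The complete digraph `K_t`. -/
def Krel (t : ℕ) : Fin t → Fin t → Prop := fun x y => x ≠ y

/-- The null digraph `K̄_t`. -/
def Nrel (t : ℕ) : Fin t → Fin t → Prop := fun _ _ => False

/-- The directed path `P_2` of length `1`. -/
def P2rel : Fin 2 → Fin 2 → Prop := fun x y => x = 0 ∧ y = 1

/-- The digraph `G_1` on `{0,1,2}` with arcs `(0,1),(1,2),(2,1),(2,0)`. -/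
def G1rel : Fin 3 → Fin 3 → Prop := fun x y =>
  (x = 0 ∧ y = 1) ∨ (x = 1 ∧ y = 2) ∨ (x = 2 ∧ y = 1) ∨ (x = 2 ∧ y = 0)

/-- The digraph `G_2` on `{0,1,2}` with arcs `(0,1),(1,0),(1,2),(2,1),(2,0)`. -/
def G2rel : Fin 3 → Fin 3 → Prop := fun x y =>
  (x = 0 ∧ y = 1) ∨ (x = 1 ∧ y = 0) ∨ (x = 1 ∧ y = 2) ∨ (x = 2 ∧ y = 1) ∨ (x = 2 ∧ y = 0)

/-- The generalized lexicographic product `G[H₀, H₁, H₂]` for a digraph `G` on `{0,1,2}`. -/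
def glex3 {α β γ : Type*} (G : Fin 3 → Fin 3 → Prop)
    (H0 : α → α → Prop) (H1 : β → β → Prop) (H2 : γ → γ → Prop) :
    α ⊕ β ⊕ γ → α ⊕ β ⊕ γ → Prop
  | .inl x, .inl y => H0 x y
  | .inl _, .inr (.inl _) => G 0 1
  | .inl _, .inr (.inr _) => G 0 2
  | .inr (.inl _), .inl _ => G 1 0
  | .inr (.inl x), .inr (.inl y) => H1 x y
  | .inr (.inl _), .inr (.inr _) => G 1 2
  | .inr (.inr _), .inl _ => G 2 0
  | .inr (.inr _), .inr (.inl _) => G 2 1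
  | .inr (.inr x), .inr (.inr y) => H2 x y

/-- A clique in a digraph: the two way distance between any two distinct
vertices of `S` is `(1,1)`. -/
noncomputable def DClique {V : Type*} (A : V → V → Prop) (S : Set V) : Prop :=
  ∀ u ∈ S, ∀ v ∈ S, u ≠ v → twoDist A u v = (1, 1)

/-- An independent set in a digraph: no arcs inside `R`. -/
def DIndependent {V : Type*} (A : V → V → Prop) (R : Set V) : Prop :=
  ∀ u ∈ R, ∀ v ∈ R, ¬ A u v

namespace ACB
variable {V : Type*} {A : V → V → Prop}

theorem wl_append {n : ℕ} {x y z : V} (h : walkLen A n x y) (ha : A y z) :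
    walkLen A (n + 1) x z := by
  induction n generalizing x with
  | zero => have hxy : x = y := h; exact ⟨z, hxy ▸ ha, rfl⟩
  | succ n ih => obtain ⟨w, hw, h'⟩ := h; exact ⟨w, hw, ih h'⟩

theorem wl_trans {m n : ℕ} {x y z : V} (h : walkLen A m x y) (h' : walkLen A n y z) :
    walkLen A (m + n) x z := by
  induction m generalizing x with
  | zero => have hxy : x = y := h; subst hxy; simpa using h'
  | succ m ih =>
      obtain ⟨w, hw, h2⟩ := h
      rw [Nat.succ_add]
      exact ⟨w, hw, ih h2⟩

theorem ddist_self (A : V → V → Prop) (x : V) : ddist A x x = 0 :=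
  Nat.sInf_eq_zero.mpr (Or.inl rfl)

theorem walk_ddist (hsc : IsStronglyConnected A) (x y : V) :
    walkLen A (ddist A x y) x y := Nat.sInf_mem (hsc x y)

theorem ddist_le {n : ℕ} {x y : V} (h : walkLen A n x y) : ddist A x y ≤ n :=
  Nat.sInf_le h

theorem ddist_eq_zero_iff (hsc : IsStronglyConnected A) {x y : V} :
    ddist A x y = 0 ↔ x = y := by
  constructor
  · intro h
    have := walk_ddist hsc x y
    rwa [h] at this
  · rintro rfl; exact ddist_self A x

theorem one_le_ddist (hsc : IsStronglyConnected A) {x y : V} (h : x ≠ y) :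
    1 ≤ ddist A x y :=
  Nat.one_le_iff_ne_zero.mpr fun h0 => h ((ddist_eq_zero_iff hsc).mp h0)

theorem ddist_arc_right (hsc : IsStronglyConnected A) {u v : V} (w : V) (h : A u v) :
    ddist A w v ≤ ddist A w u + 1 :=
  ddist_le (wl_append (walk_ddist hsc w u) h)

theorem ddist_arc_left (hsc : IsStronglyConnected A) {u v : V} (w : V) (h : A u v) :
    ddist A u w ≤ ddist A v w + 1 :=
  ddist_le ⟨v, h, walk_ddist hsc v w⟩

theorem ddist_eq_one (hsc : IsStronglyConnected A) (hirr : Irreflexive A) {x y : V}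
    (h : A x y) : ddist A x y = 1 := by
  refine le_antisymm (ddist_le ⟨y, h, rfl⟩) (one_le_ddist hsc ?_)
  rintro rfl; exact hirr x h

variable [Fintype V]

theorem ddist_le_diam (x y : V) : ddist A x y ≤ diam A := by
  have hset : {m | ∃ x y : V, ddist A x y = m}
      = Set.range (fun p : V × V => ddist A p.1 p.2) := by
    ext m; simp [Set.mem_range, Prod.exists]
  refine le_csSup ?_ ⟨x, y, rfl⟩
  rw [hset]
  exact (Set.finite_range _).bddAbove

theorem exists_diam (hV : Nonempty V) : ∃ x y : V, ddist A x y = diam A := by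
  have hset : {m | ∃ x y : V, ddist A x y = m}
      = Set.range (fun p : V × V => ddist A p.1 p.2) := by
    ext m; simp [Set.mem_range, Prod.exists]
  obtain ⟨x⟩ := hV
  have : diam A ∈ {m | ∃ x y : V, ddist A x y = m} := by
    refine Nat.sSup_mem ⟨0, x, x, ddist_self A x⟩ ?_
    rw [hset]; exact (Set.finite_range _).bddAbove
  exact this

theorem exists_resolving (hsc : IsStronglyConnected A) :
    ∃ S : Finset V, S.card = wdim A ∧ IsWeaklyResolving A ↑S := by
  have huniv : IsWeaklyResolving A (↑(Finset.univ : Finset V)) := by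
    intro u v h
    have h1 := h u (by simp)
    have h2 : ddist A u v = 0 := by
      have := congrArg Prod.fst h1
      simpa [twoDist, ddist_self] using this.symm
    exact ((ddist_eq_zero_iff hsc).mp h2)
  have hmem : wdim A ∈ {k | ∃ S : Finset V, S.card = k ∧ IsWeaklyResolving A ↑S} :=
    Nat.sInf_mem ⟨Fintype.card V, Finset.univ, Finset.card_univ, huniv⟩
  exact hmem

theorem exists_chain {n : ℕ} {x y : V} (h : walkLen A n x y) :
    ∃ g : ℕ → V, g 0 = x ∧ g n = y ∧ ∀ i < n, A (g i) (g (i + 1)) := by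
  induction n generalizing x with
  | zero =>
      have hxy : x = y := h
      exact ⟨fun _ => x, rfl, hxy, fun i hi => absurd hi (by omega)⟩
  | succ n ih =>
      obtain ⟨z, hxz, hw⟩ := h
      obtain ⟨g, hg0, hgn, hstep⟩ := ih hw
      refine ⟨fun i => if i = 0 then x else g (i - 1), by simp, by simp [hgn], ?_⟩
      intro i hi
      rcases Nat.eq_zero_or_pos i with h0 | h0
      · subst h0; simpa [hg0] using hxz
      · have h1 : i ≠ 0 := by omega
        have h2 : i + 1 ≠ 0 := by omega
        simp only [if_neg h1, if_neg h2]
        have he : i - 1 + 1 = i := by omega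
        have := hstep (i - 1) (by omega)
        rwa [he] at this

theorem chain_walk {g : ℕ → V} {n : ℕ} (hstep : ∀ i < n, A (g i) (g (i + 1))) :
    ∀ m j, j + m ≤ n → walkLen A m (g j) (g (j + m)) := by
  intro m
  induction m with
  | zero => intro j _; rfl
  | succ m ih =>
      intro j hj
      refine ⟨g (j + 1), hstep j (by omega), ?_⟩
      have := ih (j + 1) (by omega)
      rwa [show j + 1 + m = j + (m + 1) by omega] at this

end ACB

namespace ACB2

theorem gauss (e : ℕ) : 2 * ∑ a ∈ Finset.Icc 1 e, a = e * (e + 1) := by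
  induction e with
  | zero => simp
  | succ e ih =>
      rw [Finset.sum_Icc_succ_top (by omega), Nat.mul_add, ih]
      ring

theorem qa_card (d : ℕ) (hd : 1 ≤ d) :
    2 * ((Finset.Icc 1 d ×ˢ Finset.Icc 1 d).filter (fun p => p.2 ≤ p.1 + 1)).card + 2
      = d * d + 3 * d := by
  obtain ⟨e, rfl⟩ : ∃ e, d = e + 1 := ⟨d - 1, by omega⟩
  have hbu : ((Finset.Icc 1 (e+1) ×ˢ Finset.Icc 1 (e+1)).filter (fun p => p.2 ≤ p.1 + 1))
      = (Finset.Icc 1 (e+1)).biUnion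
          (fun a => {a} ×ˢ Finset.Icc 1 (min (a + 1) (e + 1))) := by
    ext ⟨a, b⟩
    simp only [Finset.mem_filter, Finset.mem_product, Finset.mem_Icc, Finset.mem_biUnion,
      Finset.mem_singleton]
    constructor
    · rintro ⟨⟨ha, hb⟩, hle⟩
      exact ⟨a, ha, rfl, by omega⟩
    · rintro ⟨a', ha', ⟨rfl, hb⟩⟩
      refine ⟨⟨ha', by omega⟩, by omega⟩
  have hdisj : ∀ a ∈ Finset.Icc 1 (e+1), ∀ b ∈ Finset.Icc 1 (e+1), a ≠ b →
      Disjoint ({a} ×ˢ Finset.Icc 1 (min (a + 1) (e + 1)))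
        ({b} ×ˢ Finset.Icc 1 (min (b + 1) (e + 1))) := by
    intro a _ b _ hab
    rw [Finset.disjoint_left]
    rintro ⟨u, v⟩ h1 h2
    simp only [Finset.mem_product, Finset.mem_singleton] at h1 h2
    exact hab (h1.1 ▸ h2.1)
  rw [hbu, Finset.card_biUnion hdisj]
  have hcards : ∀ a ∈ Finset.Icc 1 (e+1),
      ({a} ×ˢ Finset.Icc 1 (min (a + 1) (e + 1))).card = min (a + 1) (e + 1) := by
    intro a _
    rw [Finset.card_product, Finset.card_singleton, Nat.card_Icc]
    omega
  rw [Finset.sum_congr rfl hcards]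
  rw [Finset.sum_Icc_succ_top (by omega)]
  have hmin : ∀ a ∈ Finset.Icc 1 e, min (a + 1) (e + 1) = a + 1 := by
    intro a ha; simp only [Finset.mem_Icc] at ha; omega
  rw [Finset.sum_congr rfl hmin, Finset.sum_add_distrib, Finset.sum_const, Nat.card_Icc]
  have hg := gauss e
  have : min (e + 1 + 1) (e + 1) = e + 1 := by omega
  rw [this]
  have h1 : (e + 1 - 1) • 1 = e := by simp
  rw [h1]
  nlinarith [hg]

theorem qb_eq_qa (d : ℕ) :
    ((Finset.Icc 1 d ×ˢ Finset.Icc 1 d).filter (fun p : ℕ × ℕ => p.1 ≤ p.2 + 1)).card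
      = ((Finset.Icc 1 d ×ˢ Finset.Icc 1 d).filter (fun p : ℕ × ℕ => p.2 ≤ p.1 + 1)).card := by
  have himg : ((Finset.Icc 1 d ×ˢ Finset.Icc 1 d).filter (fun p : ℕ × ℕ => p.1 ≤ p.2 + 1))
      = ((Finset.Icc 1 d ×ˢ Finset.Icc 1 d).filter
          (fun p : ℕ × ℕ => p.2 ≤ p.1 + 1)).image Prod.swap := by
    ext ⟨a, b⟩
    simp only [Finset.mem_filter, Finset.mem_product, Finset.mem_Icc, Finset.mem_image,
      Prod.exists]
    constructor
    · rintro ⟨⟨ha, hb⟩, hle⟩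
      exact ⟨b, a, ⟨⟨hb, ha⟩, hle⟩, rfl⟩
    · rintro ⟨x, y, ⟨⟨hx, hy⟩, hle⟩, heq⟩
      obtain ⟨rfl, rfl⟩ : y = a ∧ x = b := by
        simpa [Prod.ext_iff] using heq
      exact ⟨⟨hy, hx⟩, hle⟩
  rw [himg, Finset.card_image_of_injective _ Prod.swap_injective]

theorem pf_card (d : ℕ) :
    (((Finset.Icc 1 d ×ˢ Finset.Icc 1 d) ×ˢ (Finset.Icc 1 d ×ˢ Finset.Icc 1 d)).filter
        (fun q => q.2.1 ≤ q.1.1 + 1 ∧ q.1.2 ≤ q.2.2 + 1)).card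
      = ((Finset.Icc 1 d ×ˢ Finset.Icc 1 d).filter (fun p : ℕ × ℕ => p.2 ≤ p.1 + 1)).card
        * ((Finset.Icc 1 d ×ˢ Finset.Icc 1 d).filter
            (fun p : ℕ × ℕ => p.1 ≤ p.2 + 1)).card := by
  set B := Finset.Icc 1 d ×ˢ Finset.Icc 1 d with hB
  have himg : (((B ×ˢ B).filter (fun q => q.2.1 ≤ q.1.1 + 1 ∧ q.1.2 ≤ q.2.2 + 1)).image
        (fun q : (ℕ × ℕ) × (ℕ × ℕ) => ((q.1.1, q.2.1), (q.1.2, q.2.2))))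
      = (B.filter (fun p : ℕ × ℕ => p.2 ≤ p.1 + 1)) ×ˢ
        (B.filter (fun p : ℕ × ℕ => p.1 ≤ p.2 + 1)) := by
    ext ⟨⟨x1, y1⟩, ⟨x2, y2⟩⟩
    simp only [Finset.mem_image, Finset.mem_filter, Finset.mem_product, Finset.mem_Icc,
      Prod.exists, Prod.ext_iff, hB]
    constructor
    · rintro ⟨a, b, c, f, h, e⟩
      obtain ⟨⟨rfl, rfl⟩, rfl, rfl⟩ := e
      tauto
    · rintro h
      exact ⟨x1, x2, y1, y2, by tauto, by simp⟩
  have hinj : Function.Injective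
      (fun q : (ℕ × ℕ) × (ℕ × ℕ) => ((q.1.1, q.2.1), (q.1.2, q.2.2))) := by
    rintro ⟨⟨a, b⟩, ⟨c, e⟩⟩ ⟨⟨a', b'⟩, ⟨c', e'⟩⟩ h
    simp only [Prod.ext_iff] at h ⊢
    tauto
  rw [← Finset.card_image_of_injective _ hinj, himg, Finset.card_product]

end ACB2

namespace ACB3

theorem ncard_univ_pi {ι β : Type*} [Fintype ι] (E : ι → Set β) :
    (Set.pi Set.univ E).ncard = ∏ i, (E i).ncard := by
  rw [← Nat.card_coe_set_eq, Nat.card_congr (Equiv.Set.univPi E), Nat.card_pi]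
  exact Finset.prod_congr rfl fun i _ => Nat.card_coe_set_eq _

theorem ncard_setOf_eq_filter {α : Type*} [Fintype α] (c : α → Prop) [DecidablePred c] :
    {x | c x}.ncard = (Finset.univ.filter c).card := by
  rw [← Set.ncard_coe_finset]; congr 1; ext x; simp

theorem e1f_card (d : ℕ) (hd : 1 ≤ d) :
    ((Finset.Icc 1 d ×ˢ Finset.Icc 1 d).filter (fun q : ℕ × ℕ => q.1 = 1)).card = d := by
  have : ((Finset.Icc 1 d ×ˢ Finset.Icc 1 d).filter (fun q : ℕ × ℕ => q.1 = 1))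
      = ({1} : Finset ℕ) ×ˢ Finset.Icc 1 d := by
    ext ⟨a, b⟩
    simp only [Finset.mem_filter, Finset.mem_product, Finset.mem_Icc, Finset.mem_singleton]
    omega
  rw [this, Finset.card_product, Finset.card_singleton, Nat.card_Icc]
  omega

theorem e2f_card (d : ℕ) (hd : 1 ≤ d) :
    ((Finset.Icc 1 d ×ˢ Finset.Icc 1 d).filter (fun q : ℕ × ℕ => q.2 = 1)).card = d := by
  have : ((Finset.Icc 1 d ×ˢ Finset.Icc 1 d).filter (fun q : ℕ × ℕ => q.2 = 1))
      = Finset.Icc 1 d ×ˢ ({1} : Finset ℕ) := by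
    ext ⟨a, b⟩
    simp only [Finset.mem_filter, Finset.mem_product, Finset.mem_Icc, Finset.mem_singleton]
    omega
  rw [this, Finset.card_product, Finset.card_singleton, Nat.card_Icc]
  omega

theorem df_card (d : ℕ) :
    ((Finset.Icc 1 d ×ˢ Finset.Icc 1 d).image (fun a : ℕ × ℕ => (a, a))).card = d * d := by
  rw [Finset.card_image_of_injective _ (fun a b h => (Prod.ext_iff.mp h).1),
    Finset.card_product, Nat.card_Icc]
  simp

theorem boxf_card (d : ℕ) : (Finset.Icc 1 d ×ˢ Finset.Icc 1 d).card = d * d := by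
  rw [Finset.card_product, Nat.card_Icc]; simp

end ACB3

/-- Theorem 2.8, inequality (3). For a `k`-dimensional digraph `Γ`
with diameter `d`, `k + d ≤ |A(Γ)| ≤ ((d²+3d-2)/2)^(2k) + (2k-d)d^(2k-1) + k² - k`. -/
theorem arc_count_bounds {V : Type*} [Fintype V] (A : V → V → Prop)
    (hirr : Irreflexive A) (hsc : IsStronglyConnected A)
    (k d : ℕ) (hdim : wdim A = k) (hdiam : diam A = d) :
    (k + d : ℤ) ≤ (Set.ncard {p : V × V | A p.1 p.2} : ℤ) ∧
    (Set.ncard {p : V × V | A p.1 p.2} : ℤ) ≤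
      (((d : ℤ) ^ 2 + 3 * (d : ℤ) - 2) / 2) ^ (2 * k) +
        (2 * (k : ℤ) - (d : ℤ)) * (d : ℤ) ^ (2 * k - 1) + (k : ℤ) ^ 2 - (k : ℤ) := by
  classical
  obtain ⟨W, hWcard, hWres⟩ := ACB.exists_resolving (A := A) hsc
  rw [hdim] at hWcard
  rcases le_or_gt (Fintype.card V) 1 with hn1 | hn2
  · -- degenerate case: at most one vertex
    have hsub : Subsingleton V := Fintype.card_le_one_iff_subsingleton.mp hn1
    have harc : {p : V × V | A p.1 p.2} = ∅ := by
      ext p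
      simp only [Set.mem_setOf_eq, Set.mem_empty_iff_false, iff_false]
      intro h
      have : p.1 = p.2 := Subsingleton.elim _ _
      exact hirr p.1 (by rwa [← this] at h)
    have hk : k = 0 := by
      rw [← hdim]
      refine Nat.sInf_eq_zero.mpr (Or.inl ?_)
      exact ⟨∅, rfl, fun u v _ => Subsingleton.elim u v⟩
    have hd : d = 0 := by
      rw [← hdiam]
      unfold diam
      rcases isEmpty_or_nonempty V with hV | hV
      · have : {m | ∃ x y : V, ddist A x y = m} = ∅ := by
          ext m; simp only [Set.mem_setOf_eq, Set.mem_empty_iff_false, iff_false]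
          rintro ⟨x, y, -⟩; exact hV.false x
        rw [this, csSup_empty]; rfl
      · have : {m | ∃ x y : V, ddist A x y = m} = {0} := by
          ext m
          constructor
          · rintro ⟨x, y, rfl⟩
            have : x = y := Subsingleton.elim _ _
            simp [this, ACB.ddist_self]
          · rintro rfl
            obtain ⟨x⟩ := hV
            exact ⟨x, x, ACB.ddist_self A x⟩
        rw [this, csSup_singleton]
    subst hk hd
    rw [harc]
    norm_num
  · -- main case: at least two vertices
    have hnt : Nontrivial V := Fintype.one_lt_card_iff_nontrivial.mp hn2
    obtain ⟨x0, y0, hx0y0⟩ := exists_pair_ne V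
    have hled : ∀ x y : V, ddist A x y ≤ d := fun x y => hdiam ▸ ACB.ddist_le_diam x y
    have hd1 : 1 ≤ d := le_trans (ACB.one_le_ddist hsc hx0y0) (hled x0 y0)
    have hk1 : 1 ≤ k := by
      rcases Nat.eq_zero_or_pos k with hk0 | h
      · exfalso
        rw [hk0, Finset.card_eq_zero] at hWcard
        subst hWcard
        exact hx0y0 (hWres x0 y0 (by simp))
      · exact h
    constructor
    · -- LOWER BOUND
      have hout : ∀ v : V, ∃ z, A v z := by
        intro v
        obtain ⟨u, hu⟩ := exists_ne v
        have h1 := ACB.one_le_ddist hsc (Ne.symm hu)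
        have hw := ACB.walk_ddist hsc v u
        obtain ⟨m, hm⟩ : ∃ m, ddist A v u = m + 1 := ⟨ddist A v u - 1, by omega⟩
        rw [hm] at hw
        obtain ⟨z, hz, -⟩ := hw
        exact ⟨z, hz⟩
      choose nxt hnxt using hout
      have hnV : Fintype.card V ≤ {p : V × V | A p.1 p.2}.ncard := by
        have h := Set.ncard_le_ncard_of_injOn (s := (Set.univ : Set V))
          (fun v => (v, nxt v)) (fun v _ => hnxt v)
          (fun a _ b _ h => (Prod.ext_iff.mp h).1) (Set.toFinite {p : V × V | A p.1 p.2})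
        rwa [Set.ncard_univ, Nat.card_eq_fintype_card] at h
      -- geodesic of length d
      obtain ⟨gx, gy, hgxy⟩ := ACB.exists_diam (A := A) inferInstance
      rw [hdiam] at hgxy
      have hwalk : walkLen A d gx gy := by
        have := ACB.walk_ddist hsc gx gy
        rwa [hgxy] at this
      obtain ⟨g, hg0, hgd, hstep⟩ := ACB.exists_chain hwalk
      have hpre : ∀ i, i ≤ d → ddist A gx (g i) = i := by
        intro i hi
        have hle : ddist A gx (g i) ≤ i := by
          have hw := ACB.chain_walk hstep i 0 (by omega)
          rw [Nat.zero_add, hg0] at hw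
          exact ACB.ddist_le hw
        have hge : i ≤ ddist A gx (g i) := by
          by_contra hlt
          push_neg at hlt
          have hsuf : walkLen A (d - i) (g i) gy := by
            have hw := ACB.chain_walk hstep (d - i) i (by omega)
            rwa [show i + (d - i) = d by omega, hgd] at hw
          have h2 := ACB.ddist_le (ACB.wl_trans (ACB.walk_ddist hsc gx (g i)) hsuf)
          rw [hgxy] at h2
          omega
        omega
      have hginj : ∀ i ≤ d, ∀ j ≤ d, g i = g j → i = j := by
        intro i hi j hj hij
        have h1 := hpre i hi
        have h2 := hpre j hj
        rw [hij] at h1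
        omega
      have hGIcard : ((Finset.Icc 1 d).image g).card = d := by
        rw [Finset.card_image_of_injOn, Nat.card_Icc]
        · omega
        · intro i hi j hj hij
          simp only [Finset.coe_Icc, Set.mem_Icc] at hi hj
          exact hginj i (by omega) j (by omega) hij
      have hScard : (Finset.univ \ (Finset.Icc 1 d).image g).card = Fintype.card V - d := by
        rw [Finset.card_sdiff_of_subset (Finset.subset_univ _), Finset.card_univ, hGIcard]
      have hgx_mem : gx ∈ Finset.univ \ (Finset.Icc 1 d).image g := by
        simp only [Finset.mem_sdiff, Finset.mem_univ, true_and, Finset.mem_image,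
          Finset.mem_Icc, not_exists]
        intro i hi
        obtain ⟨⟨hi1, hi2⟩, hgi⟩ := hi
        have h1 := hpre i (by omega)
        rw [hgi, ACB.ddist_self] at h1
        omega
      have hSres : IsWeaklyResolving A ↑(Finset.univ \ (Finset.Icc 1 d).image g) := by
        intro u v huv
        by_cases hu : u ∈ Finset.univ \ (Finset.Icc 1 d).image g
        · have h1 := huv u (by exact_mod_cast hu)
          have h2 : ddist A u v = 0 := by
            have := congrArg Prod.fst h1
            simpa [twoDist, ACB.ddist_self] using this.symm
          exact (ACB.ddist_eq_zero_iff hsc).mp h2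
        by_cases hv : v ∈ Finset.univ \ (Finset.Icc 1 d).image g
        · have h1 := huv v (by exact_mod_cast hv)
          have h2 : ddist A v u = 0 := by
            have := congrArg Prod.fst h1
            simpa [twoDist, ACB.ddist_self] using this
          exact ((ACB.ddist_eq_zero_iff hsc).mp h2).symm
        · simp only [Finset.mem_sdiff, Finset.mem_univ, true_and, not_not] at hu hv
          obtain ⟨i, hi, rfl⟩ := Finset.mem_image.mp hu
          obtain ⟨j, hj, rfl⟩ := Finset.mem_image.mp hv
          simp only [Finset.mem_Icc] at hi hj
          have h1 := huv gx (by exact_mod_cast hgx_mem)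
          have h2 : ddist A gx (g i) = ddist A gx (g j) := congrArg Prod.fst h1
          rw [hpre i (by omega), hpre j (by omega)] at h2
          rw [h2]
      have hkle : k ≤ Fintype.card V - d := by
        rw [← hdim]
        exact le_trans (Nat.sInf_le ⟨_, rfl, hSres⟩) (le_of_eq hScard)
      have hdn : d ≤ Fintype.card V := by
        rw [← hGIcard]
        exact Finset.card_le_univ _
      have : k + d ≤ Fintype.card V := by omega
      have := le_trans this hnV
      exact_mod_cast this
    · -- UPPER BOUND
      have hιcard : Fintype.card {x // x ∈ W} = k := by rw [Fintype.card_coe, hWcard]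
      set φ : V → {x // x ∈ W} → ℕ × ℕ := fun v w => twoDist A ↑w v with hφ
      have hφinj : Function.Injective φ := by
        intro u v h
        exact hWres u v fun w hw => congrFun h ⟨w, hw⟩
      have hbox : ∀ v : V, v ∉ W → ∀ w : {x // x ∈ W},
          φ v w ∈ Finset.Icc 1 d ×ˢ Finset.Icc 1 d := by
        intro v hv w
        have hne : (w : V) ≠ v := fun h => hv (h ▸ w.2)
        simp only [hφ, twoDist, Finset.mem_product, Finset.mem_Icc]
        exact ⟨⟨ACB.one_le_ddist hsc hne, hled _ _⟩,
          ⟨ACB.one_le_ddist hsc (Ne.symm hne), hled _ _⟩⟩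
      set PF := (((Finset.Icc 1 d ×ˢ Finset.Icc 1 d) ×ˢ (Finset.Icc 1 d ×ˢ Finset.Icc 1 d)).filter
        (fun q => q.2.1 ≤ q.1.1 + 1 ∧ q.1.2 ≤ q.2.2 + 1)) with hPF
      set DF := (Finset.Icc 1 d ×ˢ Finset.Icc 1 d).image (fun a : ℕ × ℕ => (a, a)) with hDF
      have hT : (Set.pi Set.univ (fun _ : {x // x ∈ W} =>
          (↑PF : Set ((ℕ × ℕ) × (ℕ × ℕ))))).ncard = PF.card ^ k := by
        rw [ACB3.ncard_univ_pi]
        simp [Set.ncard_coe_finset, hιcard, hWcard]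
      have hDG : (Set.pi Set.univ (fun _ : {x // x ∈ W} =>
          (↑DF : Set ((ℕ × ℕ) × (ℕ × ℕ))))).ncard = (d * d) ^ k := by
        rw [ACB3.ncard_univ_pi]
        have hDFc : DF.card = d * d := by rw [hDF]; exact ACB3.df_card d
        simp [Set.ncard_coe_finset, hDFc, hιcard, hWcard]
      have hTfin : (Set.pi Set.univ (fun _ : {x // x ∈ W} =>
          (↑PF : Set ((ℕ × ℕ) × (ℕ × ℕ))))).Finite :=
        Set.Finite.pi fun _ => PF.finite_toSet
      have hDGfin : (Set.pi Set.univ (fun _ : {x // x ∈ W} =>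
          (↑DF : Set ((ℕ × ℕ) × (ℕ × ℕ))))).Finite :=
        Set.Finite.pi fun _ => DF.finite_toSet
      have hDsub : (Set.pi Set.univ (fun _ : {x // x ∈ W} =>
            (↑DF : Set ((ℕ × ℕ) × (ℕ × ℕ)))))
          ⊆ Set.pi Set.univ (fun _ => (↑PF : Set ((ℕ × ℕ) × (ℕ × ℕ)))) := by
        intro f hf w hw
        have h := hf w hw
        rw [hDF] at h
        simp only [Finset.coe_image, Set.mem_image, Finset.mem_coe] at h
        obtain ⟨a, ha, hEq⟩ := h
        rw [← hEq]
        refine Finset.mem_coe.mpr (Finset.mem_filter.mpr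
          ⟨Finset.mem_product.mpr ⟨ha, ha⟩, Nat.le_succ _, Nat.le_succ _⟩)
      have hmono : (d * d) ^ k ≤ PF.card ^ k := by
        calc (d * d) ^ k
            = (Set.pi Set.univ (fun _ : {x // x ∈ W} =>
                (↑DF : Set ((ℕ × ℕ) × (ℕ × ℕ))))).ncard := hDG.symm
          _ ≤ (Set.pi Set.univ (fun _ : {x // x ∈ W} =>
                (↑PF : Set ((ℕ × ℕ) × (ℕ × ℕ))))).ncard :=
              Set.ncard_le_ncard hDsub hTfin
          _ = PF.card ^ k := hT
      -- bound 1 : arcs inside W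
      have hb1 : {p : V × V | A p.1 p.2 ∧ p.1 ∈ W ∧ p.2 ∈ W}.ncard ≤ k * k - k := by
        have hsub : {p : V × V | A p.1 p.2 ∧ p.1 ∈ W ∧ p.2 ∈ W} ⊆ ↑W.offDiag := by
          rintro ⟨a, b⟩ ⟨ha, h1, h2⟩
          refine Finset.mem_coe.mpr (Finset.mem_offDiag.mpr ⟨h1, h2, ?_⟩)
          intro h
          exact hirr a (by rwa [← h] at ha)
        calc {p : V × V | A p.1 p.2 ∧ p.1 ∈ W ∧ p.2 ∈ W}.ncard
            ≤ (↑W.offDiag : Set (V × V)).ncard :=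
              Set.ncard_le_ncard hsub (Set.toFinite _)
          _ = W.offDiag.card := Set.ncard_coe_finset _
          _ = k * k - k := by rw [Finset.offDiag_card, hWcard]
      -- bound for a single source landmark
      have hkey2 : ∀ w ∈ W, {p : V × V | A p.1 p.2 ∧ p.1 = w ∧ p.2 ∉ W}.ncard
          ≤ d * (d * d) ^ (k - 1) := by
        intro w hw
        set E : {x // x ∈ W} → Set (ℕ × ℕ) := fun w' =>
          if w' = (⟨w, hw⟩ : {x // x ∈ W}) then
            ↑((Finset.Icc 1 d ×ˢ Finset.Icc 1 d).filter (fun q : ℕ × ℕ => q.1 = 1))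
          else ↑(Finset.Icc 1 d ×ˢ Finset.Icc 1 d) with hE
        have hEfin : ∀ w', (E w').Finite := by
          intro w'
          rw [hE]
          dsimp only
          split <;> exact Finset.finite_toSet _
        have hmaps : ∀ p ∈ {p : V × V | A p.1 p.2 ∧ p.1 = w ∧ p.2 ∉ W},
            (fun p : V × V => φ p.2) p ∈ Set.pi Set.univ E := by
          rintro ⟨u, v⟩ ⟨hA, rfl, hv⟩
          rw [Set.mem_univ_pi]
          intro w'
          rw [hE]
          dsimp only
          split_ifs with hww
          · subst hww
            refine Finset.mem_coe.mpr (Finset.mem_filter.mpr ⟨hbox v hv _, ?_⟩)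
            show (φ v _).1 = 1
            simp only [hφ, twoDist]
            exact ACB.ddist_eq_one hsc hirr hA
          · exact Finset.mem_coe.mpr (hbox v hv w')
        have hinj : Set.InjOn (fun p : V × V => φ p.2)
            {p : V × V | A p.1 p.2 ∧ p.1 = w ∧ p.2 ∉ W} := by
          rintro ⟨u, v⟩ ⟨-, h1, -⟩ ⟨u', v'⟩ ⟨-, h1', -⟩ h
          have hvv : v = v' := hφinj h
          subst hvv
          rw [Prod.ext_iff]
          exact ⟨h1.trans h1'.symm, rfl⟩
        have hpicard : (Set.pi Set.univ E).ncard = d * (d * d) ^ (k - 1) := by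
          rw [ACB3.ncard_univ_pi]
          rw [← Finset.mul_prod_erase Finset.univ _
            (Finset.mem_univ (⟨w, hw⟩ : {x // x ∈ W}))]
          have h1 : (E ⟨w, hw⟩).ncard = d := by
            rw [hE]
            dsimp only
            rw [if_pos rfl, Set.ncard_coe_finset, ACB3.e1f_card d hd1]
          have h2 : ∀ w' ∈ Finset.univ.erase (⟨w, hw⟩ : {x // x ∈ W}),
              (E w').ncard = d * d := by
            intro w' hw'
            rw [hE]
            dsimp only
            rw [if_neg (Finset.mem_erase.mp hw').1, Set.ncard_coe_finset, ACB3.boxf_card]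
          rw [h1, Finset.prod_congr rfl h2, Finset.prod_const,
            Finset.card_erase_of_mem (Finset.mem_univ _), Finset.card_univ, hιcard]
        calc {p : V × V | A p.1 p.2 ∧ p.1 = w ∧ p.2 ∉ W}.ncard
            ≤ (Set.pi Set.univ E).ncard :=
              Set.ncard_le_ncard_of_injOn _ hmaps hinj (Set.Finite.pi hEfin)
          _ = d * (d * d) ^ (k - 1) := hpicard
      -- bound for a single target landmark
      have hkey3 : ∀ w ∈ W, {p : V × V | A p.1 p.2 ∧ p.1 ∉ W ∧ p.2 = w}.ncard
          ≤ d * (d * d) ^ (k - 1) := by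
        intro w hw
        set E : {x // x ∈ W} → Set (ℕ × ℕ) := fun w' =>
          if w' = (⟨w, hw⟩ : {x // x ∈ W}) then
            ↑((Finset.Icc 1 d ×ˢ Finset.Icc 1 d).filter (fun q : ℕ × ℕ => q.2 = 1))
          else ↑(Finset.Icc 1 d ×ˢ Finset.Icc 1 d) with hE
        have hEfin : ∀ w', (E w').Finite := by
          intro w'
          rw [hE]
          dsimp only
          split <;> exact Finset.finite_toSet _
        have hmaps : ∀ p ∈ {p : V × V | A p.1 p.2 ∧ p.1 ∉ W ∧ p.2 = w},
            (fun p : V × V => φ p.1) p ∈ Set.pi Set.univ E := by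
          rintro ⟨u, v⟩ ⟨hA, hu, rfl⟩
          rw [Set.mem_univ_pi]
          intro w'
          rw [hE]
          dsimp only
          split_ifs with hww
          · subst hww
            refine Finset.mem_coe.mpr (Finset.mem_filter.mpr ⟨hbox u hu _, ?_⟩)
            show (φ u _).2 = 1
            simp only [hφ, twoDist]
            exact ACB.ddist_eq_one hsc hirr hA
          · exact Finset.mem_coe.mpr (hbox u hu w')
        have hinj : Set.InjOn (fun p : V × V => φ p.1)
            {p : V × V | A p.1 p.2 ∧ p.1 ∉ W ∧ p.2 = w} := by
          rintro ⟨u, v⟩ ⟨-, -, h1⟩ ⟨u', v'⟩ ⟨-, -, h1'⟩ h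
          have huu : u = u' := hφinj h
          subst huu
          rw [Prod.ext_iff]
          exact ⟨rfl, h1.trans h1'.symm⟩
        have hpicard : (Set.pi Set.univ E).ncard = d * (d * d) ^ (k - 1) := by
          rw [ACB3.ncard_univ_pi]
          rw [← Finset.mul_prod_erase Finset.univ _
            (Finset.mem_univ (⟨w, hw⟩ : {x // x ∈ W}))]
          have h1 : (E ⟨w, hw⟩).ncard = d := by
            rw [hE]
            dsimp only
            rw [if_pos rfl, Set.ncard_coe_finset, ACB3.e2f_card d hd1]
          have h2 : ∀ w' ∈ Finset.univ.erase (⟨w, hw⟩ : {x // x ∈ W}),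
              (E w').ncard = d * d := by
            intro w' hw'
            rw [hE]
            dsimp only
            rw [if_neg (Finset.mem_erase.mp hw').1, Set.ncard_coe_finset, ACB3.boxf_card]
          rw [h1, Finset.prod_congr rfl h2, Finset.prod_const,
            Finset.card_erase_of_mem (Finset.mem_univ _), Finset.card_univ, hιcard]
        calc {p : V × V | A p.1 p.2 ∧ p.1 ∉ W ∧ p.2 = w}.ncard
            ≤ (Set.pi Set.univ E).ncard :=
              Set.ncard_le_ncard_of_injOn _ hmaps hinj (Set.Finite.pi hEfin)
          _ = d * (d * d) ^ (k - 1) := hpicard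
      -- bound 2
      have hb2 : {p : V × V | A p.1 p.2 ∧ p.1 ∈ W ∧ p.2 ∉ W}.ncard
          ≤ k * (d * (d * d) ^ (k - 1)) := by
        rw [ACB3.ncard_setOf_eq_filter]
        have hsub2 : Finset.univ.filter (fun p : V × V => A p.1 p.2 ∧ p.1 ∈ W ∧ p.2 ∉ W)
            ⊆ W.biUnion (fun w => Finset.univ.filter
              (fun p : V × V => A p.1 p.2 ∧ p.1 = w ∧ p.2 ∉ W)) := by
          intro p hp
          simp only [Finset.mem_filter, Finset.mem_univ, true_and, Finset.mem_biUnion] at hp ⊢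
          exact ⟨p.1, hp.2.1, hp.1, rfl, hp.2.2⟩
        refine le_trans (Finset.card_le_card hsub2) (le_trans Finset.card_biUnion_le ?_)
        calc ∑ w ∈ W, (Finset.univ.filter
              (fun p : V × V => A p.1 p.2 ∧ p.1 = w ∧ p.2 ∉ W)).card
            ≤ ∑ _w ∈ W, d * (d * d) ^ (k - 1) := by
              refine Finset.sum_le_sum fun w hw => ?_
              rw [← ACB3.ncard_setOf_eq_filter]
              exact hkey2 w hw
          _ = k * (d * (d * d) ^ (k - 1)) := by
              rw [Finset.sum_const, hWcard, smul_eq_mul]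
      -- bound 3
      have hb3 : {p : V × V | A p.1 p.2 ∧ p.1 ∉ W ∧ p.2 ∈ W}.ncard
          ≤ k * (d * (d * d) ^ (k - 1)) := by
        rw [ACB3.ncard_setOf_eq_filter]
        have hsub3 : Finset.univ.filter (fun p : V × V => A p.1 p.2 ∧ p.1 ∉ W ∧ p.2 ∈ W)
            ⊆ W.biUnion (fun w => Finset.univ.filter
              (fun p : V × V => A p.1 p.2 ∧ p.1 ∉ W ∧ p.2 = w)) := by
          intro p hp
          simp only [Finset.mem_filter, Finset.mem_univ, true_and, Finset.mem_biUnion] at hp ⊢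
          exact ⟨p.2, hp.2.2, hp.1, hp.2.1, rfl⟩
        refine le_trans (Finset.card_le_card hsub3) (le_trans Finset.card_biUnion_le ?_)
        calc ∑ w ∈ W, (Finset.univ.filter
              (fun p : V × V => A p.1 p.2 ∧ p.1 ∉ W ∧ p.2 = w)).card
            ≤ ∑ _w ∈ W, d * (d * d) ^ (k - 1) := by
              refine Finset.sum_le_sum fun w hw => ?_
              rw [← ACB3.ncard_setOf_eq_filter]
              exact hkey3 w hw
          _ = k * (d * (d * d) ^ (k - 1)) := by
              rw [Finset.sum_const, hWcard, smul_eq_mul]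
      -- bound 4
      have hb4 : {p : V × V | A p.1 p.2 ∧ p.1 ∉ W ∧ p.2 ∉ W}.ncard
          ≤ PF.card ^ k - (d * d) ^ k := by
        have hmaps4 : ∀ p ∈ {p : V × V | A p.1 p.2 ∧ p.1 ∉ W ∧ p.2 ∉ W},
            (fun p : V × V => fun w => (φ p.1 w, φ p.2 w)) p ∈
            (Set.pi Set.univ (fun _ : {x // x ∈ W} =>
              (↑PF : Set ((ℕ × ℕ) × (ℕ × ℕ)))))
            \ (Set.pi Set.univ (fun _ => (↑DF : Set ((ℕ × ℕ) × (ℕ × ℕ))))) := by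
          rintro ⟨u, v⟩ ⟨hA, hu, hv⟩
          constructor
          · rw [Set.mem_univ_pi]
            intro w'
            refine Finset.mem_coe.mpr (Finset.mem_filter.mpr
              ⟨Finset.mem_product.mpr ⟨hbox u hu w', hbox v hv w'⟩, ?_, ?_⟩)
            · show (φ v w').1 ≤ (φ u w').1 + 1
              simp only [hφ, twoDist]
              exact ACB.ddist_arc_right hsc _ hA
            · show (φ u w').2 ≤ (φ v w').2 + 1
              simp only [hφ, twoDist]
              exact ACB.ddist_arc_left hsc _ hA
          · intro hmem
            rw [Set.mem_univ_pi] at hmem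
            have hall : ∀ w', φ u w' = φ v w' := by
              intro w'
              have h := hmem w'
              rw [hDF] at h
              simp only [Finset.coe_image, Set.mem_image, Finset.mem_coe] at h
              obtain ⟨a, -, hEq⟩ := h
              have h1 : a = φ u w' := (Prod.ext_iff.mp hEq).1
              have h2 : a = φ v w' := (Prod.ext_iff.mp hEq).2
              rw [← h1, ← h2]
            have huv : u = v := hφinj (funext hall)
            subst huv
            exact hirr u hA
        have hinj4 : Set.InjOn (fun p : V × V => fun w => (φ p.1 w, φ p.2 w))
            {p : V × V | A p.1 p.2 ∧ p.1 ∉ W ∧ p.2 ∉ W} := by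
          rintro ⟨u, v⟩ - ⟨u', v'⟩ - h
          have h1 : φ u = φ u' := funext fun w => (Prod.ext_iff.mp (congrFun h w)).1
          have h2 : φ v = φ v' := funext fun w => (Prod.ext_iff.mp (congrFun h w)).2
          exact Prod.ext (hφinj h1) (hφinj h2)
        calc {p : V × V | A p.1 p.2 ∧ p.1 ∉ W ∧ p.2 ∉ W}.ncard
            ≤ ((Set.pi Set.univ (fun _ : {x // x ∈ W} =>
                  (↑PF : Set ((ℕ × ℕ) × (ℕ × ℕ)))))
                \ (Set.pi Set.univ (fun _ =>
                  (↑DF : Set ((ℕ × ℕ) × (ℕ × ℕ)))))).ncard :=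
              Set.ncard_le_ncard_of_injOn _ hmaps4 hinj4 (hTfin.subset Set.diff_subset)
          _ = PF.card ^ k - (d * d) ^ k := by
              rw [Set.ncard_diff hDsub hDGfin, hT, hDG]
      -- decomposition
      have hsplit : {p : V × V | A p.1 p.2}.ncard ≤
          {p : V × V | A p.1 p.2 ∧ p.1 ∈ W ∧ p.2 ∈ W}.ncard
          + {p : V × V | A p.1 p.2 ∧ p.1 ∈ W ∧ p.2 ∉ W}.ncard
          + {p : V × V | A p.1 p.2 ∧ p.1 ∉ W ∧ p.2 ∈ W}.ncard
          + {p : V × V | A p.1 p.2 ∧ p.1 ∉ W ∧ p.2 ∉ W}.ncard := by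
        have hsub : {p : V × V | A p.1 p.2} ⊆
            ({p : V × V | A p.1 p.2 ∧ p.1 ∈ W ∧ p.2 ∈ W}
            ∪ {p : V × V | A p.1 p.2 ∧ p.1 ∈ W ∧ p.2 ∉ W}
            ∪ {p : V × V | A p.1 p.2 ∧ p.1 ∉ W ∧ p.2 ∈ W})
            ∪ {p : V × V | A p.1 p.2 ∧ p.1 ∉ W ∧ p.2 ∉ W} := by
          intro p hp
          simp only [Set.mem_union, Set.mem_setOf_eq]
          by_cases h1 : p.1 ∈ W <;> by_cases h2 : p.2 ∈ W <;> tauto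
        have t0 := Set.ncard_le_ncard hsub (Set.toFinite _)
        have t1 := Set.ncard_union_le
          ({p : V × V | A p.1 p.2 ∧ p.1 ∈ W ∧ p.2 ∈ W}
            ∪ {p : V × V | A p.1 p.2 ∧ p.1 ∈ W ∧ p.2 ∉ W}
            ∪ {p : V × V | A p.1 p.2 ∧ p.1 ∉ W ∧ p.2 ∈ W})
          {p : V × V | A p.1 p.2 ∧ p.1 ∉ W ∧ p.2 ∉ W}
        have t2 := Set.ncard_union_le
          ({p : V × V | A p.1 p.2 ∧ p.1 ∈ W ∧ p.2 ∈ W}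
            ∪ {p : V × V | A p.1 p.2 ∧ p.1 ∈ W ∧ p.2 ∉ W})
          {p : V × V | A p.1 p.2 ∧ p.1 ∉ W ∧ p.2 ∈ W}
        have t3 := Set.ncard_union_le
          {p : V × V | A p.1 p.2 ∧ p.1 ∈ W ∧ p.2 ∈ W}
          {p : V × V | A p.1 p.2 ∧ p.1 ∈ W ∧ p.2 ∉ W}
        omega
      have htot : {p : V × V | A p.1 p.2}.ncard ≤
          (k * k - k) + k * (d * (d * d) ^ (k - 1)) + k * (d * (d * d) ^ (k - 1))
          + (PF.card ^ k - (d * d) ^ k) :=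
        le_trans hsplit (add_le_add (add_le_add (add_le_add hb1 hb2) hb3) hb4)
      -- numeric identities
      have hn1 : d * (d * d) ^ (k - 1) = d ^ (2 * k - 1) := by
        have hdd : d * d = d ^ 2 := (sq d).symm
        rw [hdd, ← pow_mul, ← pow_succ']
        congr 1
        omega
      have hCq := ACB2.qa_card d hd1
      have hPFcard : PF.card =
          ((Finset.Icc 1 d ×ˢ Finset.Icc 1 d).filter
            (fun p : ℕ × ℕ => p.2 ≤ p.1 + 1)).card
          * ((Finset.Icc 1 d ×ˢ Finset.Icc 1 d).filter
            (fun p : ℕ × ℕ => p.2 ≤ p.1 + 1)).card := by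
        rw [hPF, ACB2.pf_card d, ACB2.qb_eq_qa d]
      set Cq := ((Finset.Icc 1 d ×ˢ Finset.Icc 1 d).filter
        (fun p : ℕ × ℕ => p.2 ≤ p.1 + 1)).card with hCqdef
      have hn3 : PF.card ^ k = Cq ^ (2 * k) := by
        rw [hPFcard]
        have : Cq * Cq = Cq ^ 2 := (sq Cq).symm
        rw [this, ← pow_mul]
      have hn2 : (d * d) ^ k = d ^ (2 * k) := by
        have hdd : d * d = d ^ 2 := (sq d).symm
        rw [hdd, ← pow_mul]
      rw [hn1, hn3, hn2] at htot
      have hmono' : d ^ (2 * k) ≤ Cq ^ (2 * k) := by rw [← hn2, ← hn3]; exact hmono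
      have hkk : k ≤ k * k := Nat.le_mul_of_pos_left k hk1
      -- cast to ℤ
      have hZ : ({p : V × V | A p.1 p.2}.ncard : ℤ) ≤
          ((k : ℤ) * k - k) + k * (d : ℤ) ^ (2 * k - 1) + k * (d : ℤ) ^ (2 * k - 1)
          + ((Cq : ℤ) ^ (2 * k) - (d : ℤ) ^ (2 * k)) := by
        have hc := (Nat.cast_le (α := ℤ)).mpr htot
        push_cast [Nat.cast_sub hkk, Nat.cast_sub hmono'] at hc
        linarith
      have e1 : (((d : ℤ) ^ 2 + 3 * (d : ℤ) - 2) / 2) = (Cq : ℤ) := by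
        have h2 : (d : ℤ) ^ 2 + 3 * (d : ℤ) - 2 = 2 * (Cq : ℤ) := by
          have hc : (2 : ℤ) * (Cq : ℤ) + 2 = (d : ℤ) * d + 3 * d := by exact_mod_cast hCq
          rw [sq]
          linarith
        rw [h2, Int.mul_ediv_cancel_left _ two_ne_zero]
      have e4 : (d : ℤ) * (d : ℤ) ^ (2 * k - 1) = (d : ℤ) ^ (2 * k) := by
        rw [← pow_succ']
        congr 1
        omega
      have final : ((k : ℤ) * k - k) + k * (d : ℤ) ^ (2 * k - 1) + k * (d : ℤ) ^ (2 * k - 1)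
          + ((Cq : ℤ) ^ (2 * k) - (d : ℤ) ^ (2 * k))
          = (Cq : ℤ) ^ (2 * k) + (2 * (k : ℤ) - d) * (d : ℤ) ^ (2 * k - 1)
            + (k : ℤ) ^ 2 - k := by
        rw [← e4]
        ring
      rw [e1]
      linarith [hZ, final]
end

section
/- If Γ is a strongly connected vertex-transitive digraph with dim(Γ) = 1, then Γ is weakly distance-transitive. -/
lemma walkLen_auto {V : Type*} {A : V → V → Prop} {σ : V ≃ V}
    (hσ : IsDigraphAuto A σ) : ∀ n x y, walkLen A n x y ↔ walkLen A n (σ x) (σ y) := by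
  intro n
  induction n with
  | zero => intro x y; simp [walkLen, σ.apply_eq_iff_eq]
  | succ n ih =>
    intro x y
    constructor
    · rintro ⟨z, haz, hw⟩
      exact ⟨σ z, (hσ x z).mp haz, (ih z y).mp hw⟩
    · rintro ⟨z, haz, hw⟩
      refine ⟨σ.symm z, ?_, ?_⟩
      · have := (hσ x (σ.symm z)).mpr; simpa using this (by simpa using haz)
      · have := (ih (σ.symm z) y).mpr; simpa using this (by simpa using hw)

lemma ddist_auto {V : Type*} {A : V → V → Prop} {σ : V ≃ V}
    (hσ : IsDigraphAuto A σ) (x y : V) : ddist A (σ x) (σ y) = ddist A x y := by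
  unfold ddist
  congr 1
  ext n
  exact (walkLen_auto hσ n x y).symm

lemma twoDist_auto {V : Type*} {A : V → V → Prop} {σ : V ≃ V}
    (hσ : IsDigraphAuto A σ) (x y : V) : twoDist A (σ x) (σ y) = twoDist A x y := by
  simp [twoDist, ddist_auto hσ]

/-- Lemma 3.7. A `1`-dimensional vertex-transitive digraph is
weakly distance-transitive. -/
theorem dim_one_vt_implies_wdt {V : Type*} [Fintype V] (A : V → V → Prop)
    (hirr : Irreflexive A) (hsc : IsStronglyConnected A)
    (hvt : IsVertexTransitive A) (hdim : wdim A = 1) :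
    IsWeaklyDistanceTransitive A := by
  -- extract a singleton weakly resolving set
  have hne : {k | ∃ S : Finset V, S.card = k ∧ IsWeaklyResolving A ↑S}.Nonempty := by
    by_contra h
    rw [Set.not_nonempty_iff_eq_empty] at h
    rw [wdim, h, Nat.sInf_empty] at hdim
    exact absurd hdim (by norm_num)
  have hmem := Nat.sInf_mem hne
  rw [show sInf {k | ∃ S : Finset V, S.card = k ∧ IsWeaklyResolving A ↑S} = wdim A from rfl,
    hdim] at hmem
  obtain ⟨S, hcard, hres⟩ := hmem
  obtain ⟨w, hw⟩ := Finset.card_eq_one.mp hcard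
  subst hw
  intro x y x' y' hdist
  obtain ⟨σ, hσ, hσx⟩ := hvt x x'
  obtain ⟨τ, hτ, hτw⟩ := hvt w x'
  have hτ' : IsDigraphAuto A τ.symm := by
    intro a b
    have := hτ (τ.symm a) (τ.symm b)
    simpa using this.symm
  -- twoDist x' (σ y) = twoDist x' y'
  have h1 : twoDist A x' (σ y) = twoDist A x' y' := by
    rw [← hdist, ← hσx]; exact twoDist_auto hσ x y
  -- pull back through τ to base point w
  have h2 : twoDist A w (τ.symm (σ y)) = twoDist A w (τ.symm y') := by
    have e1 : twoDist A w (τ.symm (σ y)) = twoDist A x' (σ y) := by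
      rw [← hτw]
      have := twoDist_auto hτ' (τ w) (σ y)
      simpa using this
    have e2 : twoDist A w (τ.symm y') = twoDist A x' y' := by
      rw [← hτw]
      have := twoDist_auto hτ' (τ w) y'
      simpa using this
    rw [e1, e2, h1]
  have h3 : τ.symm (σ y) = τ.symm y' := by
    apply hres
    intro v hv
    simp only [Finset.coe_singleton, Set.mem_singleton_iff] at hv
    subst hv
    exact h2
  have hσy : σ y = y' := τ.symm.injective h3
  exact ⟨σ, hσ, hσx, hσy⟩
end

section
/- For i ∈ {1, 2} and positive integers t, s, the generalized lexicographic product G_i[K_1, K_t, K_s] has weak metric dimension s + t − 1. -/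
namespace WdimAux

variable {V : Type*}

lemma walkLen_one {A : V → V → Prop} {x y : V} : walkLen A 1 x y ↔ A x y := by
  constructor
  · rintro ⟨z, hz, h0⟩
    have : z = y := h0
    subst this; exact hz
  · intro h; exact ⟨y, h, rfl⟩

lemma ddist_self (A : V → V → Prop) (x : V) : ddist A x x = 0 :=
  Nat.sInf_eq_zero.mpr (Or.inl rfl)

lemma ddist_eq_one {A : V → V → Prop} {x y : V} (hne : x ≠ y) (h : A x y) :
    ddist A x y = 1 := by
  have h1 : (1 : ℕ) ∈ {n | walkLen A n x y} := walkLen_one.mpr h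
  have hle := Nat.sInf_le h1
  have hmem := Nat.sInf_mem (⟨1, h1⟩ : Set.Nonempty {n | walkLen A n x y})
  have hne0 : sInf {n | walkLen A n x y} ≠ 0 := by
    intro h0
    rw [h0] at hmem
    exact hne hmem
  unfold ddist
  omega

lemma ddist_eq_two {A : V → V → Prop} {x y : V} (hne : x ≠ y) (h1 : ¬ A x y)
    (h2 : ∃ z, A x z ∧ A z y) : ddist A x y = 2 := by
  obtain ⟨z, hxz, hzy⟩ := h2
  have h2' : (2 : ℕ) ∈ {n | walkLen A n x y} := ⟨z, hxz, y, hzy, rfl⟩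
  have hle := Nat.sInf_le h2'
  have hmem := Nat.sInf_mem (⟨2, h2'⟩ : Set.Nonempty {n | walkLen A n x y})
  have hne0 : sInf {n | walkLen A n x y} ≠ 0 := by
    intro h0; rw [h0] at hmem; exact hne hmem
  have hne1 : sInf {n | walkLen A n x y} ≠ 1 := by
    intro h0; rw [h0] at hmem; exact h1 (walkLen_one.mp hmem)
  unfold ddist
  omega

lemma twoDist_eq {A : V → V → Prop} {x y : V} {m n : ℕ}
    (h1 : ddist A x y = m) (h2 : ddist A y x = n) : twoDist A x y = (m, n) := by
  simp [twoDist, h1, h2]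

/-- The abstract two-way distance table for `G_i[K_1,K_t,K_s]`:
`p = ∂̃(a, b)`, `q = ∂̃(a, c)`, all other distinct pairs get `(1,1)`. -/
def tbl (p q : ℕ × ℕ) {t s : ℕ} :
    (Fin 1 ⊕ Fin t ⊕ Fin s) → (Fin 1 ⊕ Fin t ⊕ Fin s) → ℕ × ℕ
  | .inl _, .inl _ => (0, 0)
  | .inl _, .inr (.inl _) => p
  | .inl _, .inr (.inr _) => q
  | .inr (.inl _), .inl _ => p.swap
  | .inr (.inr _), .inl _ => q.swap
  | .inr (.inl i), .inr (.inl i') => if i = i' then (0, 0) else (1, 1)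
  | .inr (.inr j), .inr (.inr j') => if j = j' then (0, 0) else (1, 1)
  | .inr (.inl _), .inr (.inr _) => (1, 1)
  | .inr (.inr _), .inr (.inl _) => (1, 1)

lemma tbl_ne_zero {p q : ℕ × ℕ} {t s : ℕ} (hp : p ≠ (0, 0)) (hq : q ≠ (0, 0))
    {u v : Fin 1 ⊕ Fin t ⊕ Fin s} (huv : u ≠ v) : tbl p q u v ≠ (0, 0) := by
  have hp' : p.swap ≠ (0, 0) := fun h => hp (by
    have := congrArg Prod.swap h; simpa using this)
  have hq' : q.swap ≠ (0, 0) := fun h => hq (by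
    have := congrArg Prod.swap h; simpa using this)
  rcases u with x | i | j <;> rcases v with y | i' | j' <;>
    simp_all [tbl] <;> first
  | (exact huv (by simp [Subsingleton.elim x y]))
  | (intro h; subst h; simp_all)
  | simp

/-- The main combinatorial lemma: if a digraph on `Fin 1 ⊕ Fin t ⊕ Fin s`
has two-way distances given by `tbl p q` with `p ≠ q` and both nonzero,
then its weak metric dimension is `s + t - 1`. -/
lemma wdim_of_tbl {t s : ℕ} (ht : 0 < t) (hs : 0 < s)
    (A : (Fin 1 ⊕ Fin t ⊕ Fin s) → (Fin 1 ⊕ Fin t ⊕ Fin s) → Prop)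
    (p q : ℕ × ℕ) (hp : p ≠ (0, 0)) (hq : q ≠ (0, 0)) (hpq : p ≠ q)
    (htbl : ∀ u v, twoDist A u v = tbl p q u v) :
    wdim A = s + t - 1 := by
  classical
  set a : Fin 1 ⊕ Fin t ⊕ Fin s := Sum.inl 0 with ha
  set bv : Fin t → Fin 1 ⊕ Fin t ⊕ Fin s := fun i => Sum.inr (Sum.inl i) with hbv
  set cv : Fin s → Fin 1 ⊕ Fin t ⊕ Fin s := fun j => Sum.inr (Sum.inr j) with hcv
  have hbinj : Function.Injective bv := fun i i' h => by simpa [hbv] using h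
  have hcinj : Function.Injective cv := fun j j' h => by simpa [hcv] using h
  set i0 : Fin t := ⟨0, ht⟩
  set j0 : Fin s := ⟨0, hs⟩
  have htbl_self : ∀ w : Fin 1 ⊕ Fin t ⊕ Fin s, tbl (t := t) (s := s) p q w w = (0, 0) := by
    intro w; rcases w with x | i | j <;> simp [tbl]
  -- if a vertex of S has equal two-way distance tuples to u and v (u ≠ v),
  -- then that vertex is distinct from u and v
  have hself : ∀ (S : Finset (Fin 1 ⊕ Fin t ⊕ Fin s)) (u v : Fin 1 ⊕ Fin t ⊕ Fin s),
      u ≠ v → (∀ w ∈ S, twoDist A w u = twoDist A w v) → u ∉ S ∧ v ∉ S := by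
    intro S u v hne h
    constructor
    · intro hu
      have h0 := h u hu
      rw [htbl, htbl, htbl_self] at h0
      exact tbl_ne_zero hp hq hne h0.symm
    · intro hv
      have h0 := h v hv
      rw [htbl, htbl, htbl_self] at h0
      exact tbl_ne_zero hp hq (Ne.symm hne) h0
  -- Upper bound witness
  have hub : s + t - 1 ∈ {k | ∃ S : Finset (Fin 1 ⊕ Fin t ⊕ Fin s),
      S.card = k ∧ IsWeaklyResolving A ↑S} := by
    set U : Finset (Fin 1 ⊕ Fin t ⊕ Fin s) :=
      (Finset.univ.erase i0).image bv ∪ (Finset.univ.erase j0).image cv with hU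
    refine ⟨insert a U, ?_, ?_⟩
    · have haU : a ∉ U := by simp [hU, ha, hbv, hcv]
      have hdisj : Disjoint ((Finset.univ.erase i0).image bv)
          ((Finset.univ.erase j0).image cv) := by
        rw [Finset.disjoint_left]
        rintro x hx hx'
        simp only [Finset.mem_image] at hx hx'
        obtain ⟨i, _, rfl⟩ := hx
        obtain ⟨j, _, hj⟩ := hx'
        simp [hbv, hcv] at hj
      rw [Finset.card_insert_of_notMem haU, hU, Finset.card_union_of_disjoint hdisj,
        Finset.card_image_of_injective _ hbinj, Finset.card_image_of_injective _ hcinj,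
        Finset.card_erase_of_mem (Finset.mem_univ _),
        Finset.card_erase_of_mem (Finset.mem_univ _)]
      simp only [Finset.card_univ, Fintype.card_fin]
      omega
    · intro u v h
      by_contra hne
      have h' : ∀ w ∈ insert a U, twoDist A w u = twoDist A w v := by
        intro w hw
        exact h w (by simpa using hw)
      obtain ⟨hu, hv⟩ := hself _ u v hne h'
      -- any vertex not in insert a U is bv i0 or cv j0
      have hchar : ∀ x : Fin 1 ⊕ Fin t ⊕ Fin s, x ∉ insert a U →
          x = bv i0 ∨ x = cv j0 := by
        intro x hx
        rcases x with y | i | j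
        · exact absurd (Finset.mem_insert.mpr (Or.inl (by
            rw [ha]; exact congrArg Sum.inl (Subsingleton.elim y 0)))) hx
        · left
          by_contra hii
          refine hx (Finset.mem_insert.mpr (Or.inr ?_))
          rw [hU]
          refine Finset.mem_union_left _
            (Finset.mem_image.mpr ⟨i, Finset.mem_erase.mpr ⟨?_, Finset.mem_univ _⟩, rfl⟩)
          intro h'; exact hii (by rw [h'])
        · right
          by_contra hjj
          refine hx (Finset.mem_insert.mpr (Or.inr ?_))
          rw [hU]
          refine Finset.mem_union_right _
            (Finset.mem_image.mpr ⟨j, Finset.mem_erase.mpr ⟨?_, Finset.mem_univ _⟩, rfl⟩)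
          intro h'; exact hjj (by rw [h'])
      have hA := h' a (Finset.mem_insert_self _ _)
      rw [htbl, htbl] at hA
      rcases hchar u hu with rfl | rfl <;> rcases hchar v hv with rfl | rfl
      · exact hne rfl
      · exact hpq (by simpa [tbl, ha, hbv, hcv] using hA)
      · exact hpq (by simpa [tbl, ha, hbv, hcv] using hA.symm)
      · exact hne rfl
  -- Lower bound
  have hlb : ∀ k ∈ {k | ∃ S : Finset (Fin 1 ⊕ Fin t ⊕ Fin s),
      S.card = k ∧ IsWeaklyResolving A ↑S}, s + t - 1 ≤ k := by
    rintro k ⟨S, rfl, hres⟩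
    have hres' : ∀ u v : Fin 1 ⊕ Fin t ⊕ Fin s,
        (∀ w ∈ S, twoDist A w u = twoDist A w v) → u = v := by
      intro u v h; exact hres u v (fun w hw => h w (by simpa using hw))
    -- at most one b-vertex missing from S
    have hBB : ∀ i i' : Fin t, bv i ∉ S → bv i' ∉ S → i = i' := by
      intro i i' hi hi'
      have := hres' (bv i) (bv i') ?_
      · exact hbinj this
      intro w hw
      rw [htbl, htbl]
      rcases w with y | i'' | j''
      · simp [tbl, hbv]
      · have h1 : i'' ≠ i := fun h => hi (h ▸ hw)
        have h2 : i'' ≠ i' := fun h => hi' (h ▸ hw)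
        simp [tbl, hbv, h1, h2]
      · simp [tbl, hbv, hcv]
    have hCC : ∀ j j' : Fin s, cv j ∉ S → cv j' ∉ S → j = j' := by
      intro j j' hj hj'
      have := hres' (cv j) (cv j') ?_
      · exact hcinj this
      intro w hw
      rw [htbl, htbl]
      rcases w with y | i'' | j''
      · simp [tbl, hcv]
      · simp [tbl, hbv, hcv]
      · have h1 : j'' ≠ j := fun h => hj (h ▸ hw)
        have h2 : j'' ≠ j' := fun h => hj' (h ▸ hw)
        simp [tbl, hcv, h1, h2]
    set Bin : Finset (Fin t) := Finset.univ.filter (fun i => bv i ∈ S) with hBin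
    set Cin : Finset (Fin s) := Finset.univ.filter (fun j => cv j ∈ S) with hCin
    have hBcard : t - 1 ≤ Bin.card := by
      have h1 : (Finset.univ.filter (fun i : Fin t => ¬ bv i ∈ S)).card ≤ 1 :=
        Finset.card_le_one.mpr (by
          intro i hi i' hi'
          simp only [Finset.mem_filter] at hi hi'
          exact hBB i i' hi.2 hi'.2)
      have h2 := Finset.card_filter_add_card_filter_not
        (s := (Finset.univ : Finset (Fin t))) (p := fun i => bv i ∈ S)
      rw [← hBin] at h2
      simp only [Finset.card_univ, Fintype.card_fin] at h2
      omega
    have hCcard : s - 1 ≤ Cin.card := by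
      have h1 : (Finset.univ.filter (fun j : Fin s => ¬ cv j ∈ S)).card ≤ 1 :=
        Finset.card_le_one.mpr (by
          intro j hj j' hj'
          simp only [Finset.mem_filter] at hj hj'
          exact hCC j j' hj.2 hj'.2)
      have h2 := Finset.card_filter_add_card_filter_not
        (s := (Finset.univ : Finset (Fin s))) (p := fun j => cv j ∈ S)
      rw [← hCin] at h2
      simp only [Finset.card_univ, Fintype.card_fin] at h2
      omega
    have hdisj : Disjoint (Bin.image bv) (Cin.image cv) := by
      rw [Finset.disjoint_left]
      rintro x hx hx'
      simp only [Finset.mem_image] at hx hx'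
      obtain ⟨i, _, rfl⟩ := hx
      obtain ⟨j, _, hj⟩ := hx'
      simp [hbv, hcv] at hj
    have hsubU : Bin.image bv ∪ Cin.image cv ⊆ S := by
      intro x hx
      rcases Finset.mem_union.mp hx with hx | hx <;>
        · simp only [Finset.mem_image] at hx
          obtain ⟨i, hi, rfl⟩ := hx
          first
            | exact (Finset.mem_filter.mp hi).2
            | exact (Finset.mem_filter.mp hi).2
    have hcardU : Bin.card + Cin.card ≤ S.card := by
      calc Bin.card + Cin.card
          = (Bin.image bv ∪ Cin.image cv).card := by
            rw [Finset.card_union_of_disjoint hdisj,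
              Finset.card_image_of_injective _ hbinj,
              Finset.card_image_of_injective _ hcinj]
        _ ≤ S.card := Finset.card_le_card hsubU
    by_cases hBall : ∀ i : Fin t, bv i ∈ S
    · have : Bin = Finset.univ := by
        ext i; simp [hBin, hBall i]
      rw [this] at hcardU
      simp only [Finset.card_univ, Fintype.card_fin] at hcardU
      omega
    by_cases hCall : ∀ j : Fin s, cv j ∈ S
    · have : Cin = Finset.univ := by
        ext j; simp [hCin, hCall j]
      rw [this] at hcardU
      simp only [Finset.card_univ, Fintype.card_fin] at hcardU
      omega
    push_neg at hBall hCall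
    obtain ⟨ib, hib⟩ := hBall
    obtain ⟨jc, hjc⟩ := hCall
    -- a must be in S
    have haS : a ∈ S := by
      by_contra haS
      have := hres' (bv ib) (cv jc) ?_
      · simp [hbv, hcv] at this
      intro w hw
      rw [htbl, htbl]
      rcases w with y | i'' | j''
      · exact absurd hw (by simpa [ha, Subsingleton.elim y (0 : Fin 1)] using haS)
      · have h1 : i'' ≠ ib := fun h => hib (h ▸ hw)
        simp [tbl, hbv, hcv, h1]
      · have h2 : j'' ≠ jc := fun h => hjc (h ▸ hw)
        simp [tbl, hbv, hcv, h2]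
    have hsub2 : insert a (Bin.image bv ∪ Cin.image cv) ⊆ S := by
      intro x hx
      rcases Finset.mem_insert.mp hx with rfl | hx
      · exact haS
      · exact hsubU hx
    have haU2 : a ∉ Bin.image bv ∪ Cin.image cv := by
      simp [ha, hbv, hcv]
    have hcard2 : 1 + (Bin.card + Cin.card) ≤ S.card := by
      calc 1 + (Bin.card + Cin.card)
          = (insert a (Bin.image bv ∪ Cin.image cv)).card := by
            rw [Finset.card_insert_of_notMem haU2, Finset.card_union_of_disjoint hdisj,
              Finset.card_image_of_injective _ hbinj,
              Finset.card_image_of_injective _ hcinj]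
            omega
        _ ≤ S.card := Finset.card_le_card hsub2
    omega
  unfold wdim
  exact le_antisymm (Nat.sInf_le hub) (le_csInf ⟨_, hub⟩ hlb)

lemma htbl_G1 {t s : ℕ} (ht : 0 < t) (hs : 0 < s) :
    ∀ u v, twoDist (glex3 G1rel (Krel 1) (Krel t) (Krel s)) u v
      = tbl (1, 2) (2, 1) u v := by
  set A := glex3 G1rel (Krel 1) (Krel t) (Krel s) with hA
  set i0 : Fin t := ⟨0, ht⟩
  set j0 : Fin s := ⟨0, hs⟩
  have g01 : G1rel 0 1 := by unfold G1rel; simp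
  have g12 : G1rel 1 2 := by unfold G1rel; simp
  have g21 : G1rel 2 1 := by unfold G1rel; simp
  have g20 : G1rel 2 0 := by unfold G1rel; simp
  have ng10 : ¬ G1rel 1 0 := by unfold G1rel; decide
  have ng02 : ¬ G1rel 0 2 := by unfold G1rel; decide
  have arc_ab : ∀ (x : Fin 1) (i : Fin t), A (Sum.inl x) (Sum.inr (Sum.inl i)) :=
    fun _ _ => g01
  have arc_nba : ∀ (i : Fin t) (x : Fin 1), ¬ A (Sum.inr (Sum.inl i)) (Sum.inl x) :=
    fun _ _ => ng10
  have arc_nac : ∀ (x : Fin 1) (j : Fin s), ¬ A (Sum.inl x) (Sum.inr (Sum.inr j)) :=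
    fun _ _ => ng02
  have arc_ca : ∀ (j : Fin s) (x : Fin 1), A (Sum.inr (Sum.inr j)) (Sum.inl x) :=
    fun _ _ => g20
  have arc_bc : ∀ (i : Fin t) (j : Fin s), A (Sum.inr (Sum.inl i)) (Sum.inr (Sum.inr j)) :=
    fun _ _ => g12
  have arc_cb : ∀ (j : Fin s) (i : Fin t), A (Sum.inr (Sum.inr j)) (Sum.inr (Sum.inl i)) :=
    fun _ _ => g21
  have arc_bb : ∀ {i i' : Fin t}, i ≠ i' → A (Sum.inr (Sum.inl i)) (Sum.inr (Sum.inl i')) :=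
    fun h => h
  have arc_cc : ∀ {j j' : Fin s}, j ≠ j' → A (Sum.inr (Sum.inr j)) (Sum.inr (Sum.inr j')) :=
    fun h => h
  rintro (x | i | j) (y | i' | j')
  · rw [Subsingleton.elim x y]
    exact (twoDist_eq (ddist_self A _) (ddist_self A _)).trans (by simp [tbl])
  · exact twoDist_eq (ddist_eq_one (by simp) (arc_ab x i'))
      (ddist_eq_two (by simp) (arc_nba i' x)
        ⟨Sum.inr (Sum.inr j0), arc_bc i' j0, arc_ca j0 x⟩)
  · exact twoDist_eq
      (ddist_eq_two (by simp) (arc_nac x j')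
        ⟨Sum.inr (Sum.inl i0), arc_ab x i0, arc_bc i0 j'⟩)
      (ddist_eq_one (by simp) (arc_ca j' x))
  · exact twoDist_eq
      (ddist_eq_two (by simp) (arc_nba i y)
        ⟨Sum.inr (Sum.inr j0), arc_bc i j0, arc_ca j0 y⟩)
      (ddist_eq_one (by simp) (arc_ab y i))
  · rcases eq_or_ne i i' with rfl | hii
    · exact (twoDist_eq (ddist_self A _) (ddist_self A _)).trans (by simp [tbl])
    · exact (twoDist_eq (ddist_eq_one (by simp [hii]) (arc_bb hii))
        (ddist_eq_one (by simp [hii.symm]) (arc_bb hii.symm))).trans (by simp [tbl, hii])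
  · exact twoDist_eq (ddist_eq_one (by simp) (arc_bc i j'))
      (ddist_eq_one (by simp) (arc_cb j' i))
  · exact twoDist_eq (ddist_eq_one (by simp) (arc_ca j y))
      (ddist_eq_two (by simp) (arc_nac y j)
        ⟨Sum.inr (Sum.inl i0), arc_ab y i0, arc_bc i0 j⟩)
  · exact twoDist_eq (ddist_eq_one (by simp) (arc_cb j i'))
      (ddist_eq_one (by simp) (arc_bc i' j))
  · rcases eq_or_ne j j' with rfl | hjj
    · exact (twoDist_eq (ddist_self A _) (ddist_self A _)).trans (by simp [tbl])
    · exact (twoDist_eq (ddist_eq_one (by simp [hjj]) (arc_cc hjj))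
        (ddist_eq_one (by simp [hjj.symm]) (arc_cc hjj.symm))).trans (by simp [tbl, hjj])

lemma htbl_G2 {t s : ℕ} (ht : 0 < t) (hs : 0 < s) :
    ∀ u v, twoDist (glex3 G2rel (Krel 1) (Krel t) (Krel s)) u v
      = tbl (1, 1) (2, 1) u v := by
  set A := glex3 G2rel (Krel 1) (Krel t) (Krel s) with hA
  set i0 : Fin t := ⟨0, ht⟩
  set j0 : Fin s := ⟨0, hs⟩
  have g01 : G2rel 0 1 := by unfold G2rel; simp
  have g10 : G2rel 1 0 := by unfold G2rel; simp
  have g12 : G2rel 1 2 := by unfold G2rel; simp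
  have g21 : G2rel 2 1 := by unfold G2rel; simp
  have g20 : G2rel 2 0 := by unfold G2rel; simp
  have ng02 : ¬ G2rel 0 2 := by unfold G2rel; decide
  have arc_ab : ∀ (x : Fin 1) (i : Fin t), A (Sum.inl x) (Sum.inr (Sum.inl i)) :=
    fun _ _ => g01
  have arc_ba : ∀ (i : Fin t) (x : Fin 1), A (Sum.inr (Sum.inl i)) (Sum.inl x) :=
    fun _ _ => g10
  have arc_nac : ∀ (x : Fin 1) (j : Fin s), ¬ A (Sum.inl x) (Sum.inr (Sum.inr j)) :=
    fun _ _ => ng02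
  have arc_ca : ∀ (j : Fin s) (x : Fin 1), A (Sum.inr (Sum.inr j)) (Sum.inl x) :=
    fun _ _ => g20
  have arc_bc : ∀ (i : Fin t) (j : Fin s), A (Sum.inr (Sum.inl i)) (Sum.inr (Sum.inr j)) :=
    fun _ _ => g12
  have arc_cb : ∀ (j : Fin s) (i : Fin t), A (Sum.inr (Sum.inr j)) (Sum.inr (Sum.inl i)) :=
    fun _ _ => g21
  have arc_bb : ∀ {i i' : Fin t}, i ≠ i' → A (Sum.inr (Sum.inl i)) (Sum.inr (Sum.inl i')) :=
    fun h => h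
  have arc_cc : ∀ {j j' : Fin s}, j ≠ j' → A (Sum.inr (Sum.inr j)) (Sum.inr (Sum.inr j')) :=
    fun h => h
  rintro (x | i | j) (y | i' | j')
  · rw [Subsingleton.elim x y]
    exact (twoDist_eq (ddist_self A _) (ddist_self A _)).trans (by simp [tbl])
  · exact twoDist_eq (ddist_eq_one (by simp) (arc_ab x i'))
      (ddist_eq_one (by simp) (arc_ba i' x))
  · exact twoDist_eq
      (ddist_eq_two (by simp) (arc_nac x j')
        ⟨Sum.inr (Sum.inl i0), arc_ab x i0, arc_bc i0 j'⟩)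
      (ddist_eq_one (by simp) (arc_ca j' x))
  · exact twoDist_eq (ddist_eq_one (by simp) (arc_ba i y))
      (ddist_eq_one (by simp) (arc_ab y i))
  · rcases eq_or_ne i i' with rfl | hii
    · exact (twoDist_eq (ddist_self A _) (ddist_self A _)).trans (by simp [tbl])
    · exact (twoDist_eq (ddist_eq_one (by simp [hii]) (arc_bb hii))
        (ddist_eq_one (by simp [hii.symm]) (arc_bb hii.symm))).trans (by simp [tbl, hii])
  · exact twoDist_eq (ddist_eq_one (by simp) (arc_bc i j'))
      (ddist_eq_one (by simp) (arc_cb j' i))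
  · exact twoDist_eq (ddist_eq_one (by simp) (arc_ca j y))
      (ddist_eq_two (by simp) (arc_nac y j)
        ⟨Sum.inr (Sum.inl i0), arc_ab y i0, arc_bc i0 j⟩)
  · exact twoDist_eq (ddist_eq_one (by simp) (arc_cb j i'))
      (ddist_eq_one (by simp) (arc_bc i' j))
  · rcases eq_or_ne j j' with rfl | hjj
    · exact (twoDist_eq (ddist_self A _) (ddist_self A _)).trans (by simp [tbl])
    · exact (twoDist_eq (ddist_eq_one (by simp [hjj]) (arc_cc hjj))
        (ddist_eq_one (by simp [hjj.symm]) (arc_cc hjj.symm))).trans (by simp [tbl, hjj])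

end WdimAux

/-- Lemma 4.3. `dim(G_i[K_1, K_t, K_s]) = s + t - 1` for `i = 1, 2`. -/
theorem dim_glex_K1_Kt_Ks (t s : ℕ) (ht : 0 < t) (hs : 0 < s) :
    wdim (glex3 G1rel (Krel 1) (Krel t) (Krel s)) = s + t - 1 ∧
    wdim (glex3 G2rel (Krel 1) (Krel t) (Krel s)) = s + t - 1 := by
  constructor
  · exact WdimAux.wdim_of_tbl ht hs _ (1, 2) (2, 1) (by decide) (by decide) (by decide)
      (WdimAux.htbl_G1 ht hs)
  · exact WdimAux.wdim_of_tbl ht hs _ (1, 1) (2, 1) (by decide) (by decide) (by decide)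
      (WdimAux.htbl_G2 ht hs)
end

section
/- If a strongly connected digraph Γ has an arc of type (1, r) — i.e., an arc (x,y) with ∂(y,x) = r — then dim(Γ) ≤ |V(Γ)| − r. -/
lemma walkLen_trans' {V : Type*} {A : V → V → Prop} :
    ∀ {m : ℕ} {n : ℕ} {x y z : V}, walkLen A m x y → walkLen A n y z →
      walkLen A (m + n) x z := by
  intro m
  induction m with
  | zero => intro n x y z h1 h2; simp only [walkLen] at h1; subst h1; simpa using h2
  | succ m ih =>
    intro n x y z h1 h2
    obtain ⟨w, haw, hw⟩ := h1
    have he : m + 1 + n = (m + n) + 1 := by omega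
    rw [he]
    exact ⟨w, haw, ih hw h2⟩

lemma ddist_le' {V : Type*} {A : V → V → Prop} {n : ℕ} {x y : V}
    (h : walkLen A n x y) : ddist A x y ≤ n := Nat.sInf_le h

lemma walkLen_ddist' {V : Type*} {A : V → V → Prop} (hsc : IsStronglyConnected A)
    (x y : V) : walkLen A (ddist A x y) x y := Nat.sInf_mem (hsc x y)

lemma ddist_eq_zero' {V : Type*} {A : V → V → Prop} (hsc : IsStronglyConnected A)
    {x y : V} (h : ddist A x y = 0) : x = y := by
  have := walkLen_ddist' hsc x y
  rw [h] at this
  exact this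

lemma walkLen_exists_chain' {V : Type*} {A : V → V → Prop} :
    ∀ {n : ℕ} {x y : V}, walkLen A n x y →
      ∃ f : ℕ → V, f 0 = x ∧ f n = y ∧ ∀ i < n, A (f i) (f (i + 1)) := by
  intro n
  induction n with
  | zero =>
    intro x y h
    simp only [walkLen] at h; subst h
    exact ⟨fun _ => x, rfl, rfl, by omega⟩
  | succ n ih =>
    intro x y h
    obtain ⟨z, haz, hz⟩ := h
    obtain ⟨f, hf0, hfn, hfA⟩ := ih hz
    refine ⟨fun k => Nat.casesOn k x (fun k' => f k'), rfl, hfn, ?_⟩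
    intro i hi
    cases i with
    | zero => simpa [hf0] using haz
    | succ j => exact hfA j (by omega)

lemma chain_walkLen' {V : Type*} {A : V → V → Prop} (f : ℕ → V) :
    ∀ n : ℕ, (∀ i < n, A (f i) (f (i + 1))) → walkLen A n (f 0) (f n) := by
  intro n
  induction n with
  | zero => intro _; rfl
  | succ n ih =>
    intro h
    have h1 : walkLen A n (f 0) (f n) := ih fun i hi => h i (by omega)
    have h2 : walkLen A 1 (f n) (f (n + 1)) := ⟨f (n + 1), h n (by omega), rfl⟩
    exact walkLen_trans' h1 h2

/-- Lemma 4.5. If a digraph `Γ` has an arc of type `(1,r)`,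
then `dim(Γ) ≤ |V(Γ)| - r`. -/
theorem wdim_le_of_arc_type {V : Type*} [Fintype V] (A : V → V → Prop)
    (hirr : Irreflexive A) (hsc : IsStronglyConnected A)
    (x y : V) (r : ℕ) (harc : A x y) (htype : ddist A y x = r) :
    wdim A ≤ Fintype.card V - r := by
  classical
  -- a shortest walk from y to x of length r
  have hwalk : walkLen A r y x := by rw [← htype]; exact walkLen_ddist' hsc y x
  obtain ⟨f, hf0, hfr, hfA⟩ := walkLen_exists_chain' hwalk
  -- each vertex on the chain is at exact distance i from y
  have hdist : ∀ i ≤ r, ddist A y (f i) = i := by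
    intro i hi
    have hle : ddist A y (f i) ≤ i := by
      have := chain_walkLen' f i (fun k hk => hfA k (by omega))
      rw [hf0] at this
      exact ddist_le' this
    have hge : i ≤ ddist A y (f i) := by
      have hseg : walkLen A (r - i) (f i) x := by
        have := chain_walkLen' (fun k => f (i + k)) (r - i)
          (fun k hk => by
            show A (f (i + k)) (f (i + (k + 1)))
            rw [← Nat.add_assoc]
            exact hfA (i + k) (by omega))
        simp only [Nat.add_zero] at this
        rw [show i + (r - i) = r by omega, hfr] at this
        exact this
      have h2 : ddist A (f i) x ≤ r - i := ddist_le' hseg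
      have h3 : r ≤ ddist A y (f i) + ddist A (f i) x := by
        rw [← htype]
        exact Nat.sInf_le (walkLen_trans' (walkLen_ddist' hsc y (f i))
          (walkLen_ddist' hsc (f i) x))
      omega
    omega
  -- the removed vertices
  set T : Finset V := Finset.image (fun i : Fin r => f (i.val + 1)) Finset.univ with hT
  have hTcard : T.card = r := by
    rw [hT, Finset.card_image_of_injective _ ?_, Finset.card_univ, Fintype.card_fin]
    intro i j hij
    have hij' : f (i.val + 1) = f (j.val + 1) := hij
    have hi := hdist (i.val + 1) (by omega)
    have hj := hdist (j.val + 1) (by omega)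
    rw [hij'] at hi
    exact Fin.ext (by omega)
  set S : Finset V := Finset.univ \ T with hS
  have hScard : S.card = Fintype.card V - r := by
    rw [hS, Finset.card_sdiff_of_subset (Finset.subset_univ T), Finset.card_univ, hTcard]
  have hyS : y ∈ S := by
    rw [hS, Finset.mem_sdiff]
    refine ⟨Finset.mem_univ y, ?_⟩
    rw [hT]
    simp only [Finset.mem_image, Finset.mem_univ, true_and]
    rintro ⟨i, hiy⟩
    have hi := hdist (i.val + 1) (by omega)
    rw [hiy] at hi
    have : ddist A y y = 0 :=
      Nat.le_antisymm (Nat.sInf_le (show walkLen A 0 y y from rfl)) (Nat.zero_le _)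
    omega
  have hres : IsWeaklyResolving A ↑S := by
    intro u v h
    by_cases hu : u ∈ T
    · by_cases hv : v ∈ T
      · -- both removed: distinguish with y
        rw [hT] at hu hv
        simp only [Finset.mem_image, Finset.mem_univ, true_and] at hu hv
        obtain ⟨i, hi⟩ := hu
        obtain ⟨j, hj⟩ := hv
        have hi' : f (i.val + 1) = u := hi
        have hj' : f (j.val + 1) = v := hj
        have hy := h y hyS
        have h1 : ddist A y u = ddist A y v := congrArg Prod.fst hy
        have hdi := hdist (i.val + 1) (by omega)
        have hdj := hdist (j.val + 1) (by omega)
        rw [hi'] at hdi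
        rw [hj'] at hdj
        rw [← hi', ← hj', show i.val = j.val by omega]
      · -- v ∈ S: distinguish with v
        have hvS : v ∈ S := by
          rw [hS, Finset.mem_sdiff]; exact ⟨Finset.mem_univ v, hv⟩
        have hv' := h v hvS
        have h1 : ddist A v u = ddist A v v := congrArg Prod.fst hv'
        have h0 : ddist A v v = 0 :=
          Nat.le_antisymm (Nat.sInf_le (show walkLen A 0 v v from rfl)) (Nat.zero_le _)
        exact (ddist_eq_zero' hsc (by omega)).symm
    · -- u ∈ S: distinguish with u
      have huS : u ∈ S := by
        rw [hS, Finset.mem_sdiff]; exact ⟨Finset.mem_univ u, hu⟩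
      have hu' := h u huS
      have h1 : ddist A u u = ddist A u v := congrArg Prod.fst hu'
      have h0 : ddist A u u = 0 :=
          Nat.le_antisymm (Nat.sInf_le (show walkLen A 0 u u from rfl)) (Nat.zero_le _)
      exact ddist_eq_zero' hsc (by omega)
  exact Nat.sInf_le ⟨S, hScard, hres⟩
end
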